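/- Let c > 0 and 0 < γ < 1, set a(x) = exp(c x^{1−γ}) for x ≥ 0, and define T_t on L²(0,∞) by (T_t f)(x) = (a(x+t)/a(x)) f(x+t). Then ‖T_t‖ = exp(c t^{1−γ}) for every t ≥ 0, and the function t ↦ exp(c t^{1−γ}) is log-concave, so it equals its own upper log-concave envelope N(t). -/

import Mathlib

open MeasureTheory Set Filter ENNReal Topology

lemma aux_subadd {β : ℝ} (hβ0 : 0 ≤ β) (hβ1 : β ≤ 1) {x t : ℝ} (hx : 0 ≤ x) (ht : 0 ≤ t) :
    (x + t) ^ β ≤ x ^ β + t ^ β := by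
  have h := NNReal.rpow_add_le_add_rpow x.toNNReal t.toNNReal hβ0 hβ1
  have h2 := NNReal.coe_le_coe.2 h
  rw [NNReal.coe_add, NNReal.coe_rpow, NNReal.coe_rpow, NNReal.coe_rpow,
    NNReal.coe_add, Real.coe_toNNReal _ hx, Real.coe_toNNReal _ ht] at h2
  exact h2

lemma aux_shift (f : ℝ → ℂ) (t : ℝ) (ht : 0 ≤ t) :
    eLpNorm (fun x => f (x + t)) 2 (volume.restrict (Set.Ioi (0:ℝ)))
      ≤ eLpNorm f 2 (volume.restrict (Set.Ioi (0:ℝ))) := by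
  rw [eLpNorm_eq_lintegral_rpow_enorm_toReal two_ne_zero ENNReal.ofNat_ne_top,
      eLpNorm_eq_lintegral_rpow_enorm_toReal two_ne_zero ENNReal.ofNat_ne_top]
  refine ENNReal.rpow_le_rpow ?_ (by norm_num)
  set F : ℝ → ℝ≥0∞ := fun y => ‖f y‖ₑ ^ (2:ℝ≥0∞).toReal with hF
  calc ∫⁻ x in Set.Ioi (0:ℝ), F (x + t) ∂volume
      = ∫⁻ x, (Set.Ioi t).indicator F (x + t) ∂volume := by
        rw [← lintegral_indicator measurableSet_Ioi]
        congr 1; ext x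
        by_cases hx : x ∈ Set.Ioi (0:ℝ)
        · rw [Set.indicator_of_mem hx, Set.indicator_of_mem (by simpa [lt_add_iff_pos_left] using hx)]
        · rw [Set.indicator_of_notMem hx, Set.indicator_of_notMem (by simpa [lt_add_iff_pos_left] using hx)]
    _ = ∫⁻ x, (Set.Ioi t).indicator F x ∂volume := lintegral_add_right_eq_self _ t
    _ = ∫⁻ x in Set.Ioi t, F x ∂volume := lintegral_indicator measurableSet_Ioi _
    _ ≤ ∫⁻ x in Set.Ioi (0:ℝ), F x ∂volume :=
        lintegral_mono' (Measure.restrict_mono (Set.Ioi_subset_Ioi ht) le_rfl) le_rfl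

/-- Let `c > 0`, `0 < γ < 1`, `a x = exp (c x^{1-γ})`, and let `T` be
the family of operators on `L²(0,∞)` given by `(T_t f) x = (a (x+t) / a x) f (x+t)`.
Then `‖T t‖ = exp (c t^{1-γ})` for every `t ≥ 0`, the function `t ↦ c t^{1-γ}` is concave
on `[0,∞)` (i.e. `t ↦ exp (c t^{1-γ})` is log-concave), and hence `‖T t‖` coincides with
its upper log-concave envelope `N = exp ν`. -/
theorem stmt_13
    (c γ : ℝ) (hc : 0 < c) (hγ0 : 0 < γ) (hγ1 : γ < 1)
    (a : ℝ → ℝ) (ha : ∀ x, a x = Real.exp (c * x ^ (1 - γ)))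
    (T : ℝ → (Lp ℂ 2 (volume.restrict (Set.Ioi (0:ℝ))) →L[ℂ]
        Lp ℂ 2 (volume.restrict (Set.Ioi (0:ℝ)))))
    (hT : ∀ t : ℝ, 0 ≤ t → ∀ f : Lp ℂ 2 (volume.restrict (Set.Ioi (0:ℝ))),
      (T t f : ℝ → ℂ) =ᵐ[volume.restrict (Set.Ioi (0:ℝ))]
        fun x => ((a (x + t) / a x : ℝ) : ℂ) * f (x + t)) :
    (∀ t : ℝ, 0 ≤ t → ‖T t‖ = Real.exp (c * t ^ (1 - γ))) ∧
    ConcaveOn ℝ (Set.Ici (0:ℝ)) (fun t => c * t ^ (1 - γ)) ∧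
    (∀ ν : ℝ → ℝ, ConcaveOn ℝ (Set.Ici (0:ℝ)) ν →
      (∀ t : ℝ, 0 ≤ t → Real.log ‖T t‖ ≤ ν t) →
      (∀ κ : ℝ → ℝ, ConcaveOn ℝ (Set.Ici (0:ℝ)) κ →
        (∀ t : ℝ, 0 ≤ t → Real.log ‖T t‖ ≤ κ t) → ∀ t : ℝ, 0 ≤ t → ν t ≤ κ t) →
      ∀ t : ℝ, 0 ≤ t → Real.exp (ν t) = ‖T t‖) := by
  
  set β : ℝ := 1 - γ with hβdef
  have hβ0 : 0 < β := by simp only [hβdef]; linarith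
  have hβ1 : β ≤ 1 := by simp only [hβdef]; linarith
  -- the multiplier formula
  have hm : ∀ x t : ℝ, a (x + t) / a x = Real.exp (c * (x + t) ^ β - c * x ^ β) := by
    intro x t
    rw [ha, ha, ← Real.exp_sub]
  -- Part 1
  have part1 : ∀ t : ℝ, 0 ≤ t → ‖T t‖ = Real.exp (c * t ^ β) := by
    intro t ht
    set M : ℝ := Real.exp (c * t ^ β) with hMdef
    have hM : 0 < M := Real.exp_pos _
    refine le_antisymm ?_ ?_
    · -- upper bound
      refine ContinuousLinearMap.opNorm_le_bound _ hM.le fun f => ?_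
      have h1 : eLpNorm (⇑(T t f)) 2 (volume.restrict (Set.Ioi (0:ℝ)))
          = eLpNorm (fun x => ((a (x + t) / a x : ℝ) : ℂ) * f (x + t)) 2 (volume.restrict (Set.Ioi (0:ℝ))) :=
        eLpNorm_congr_ae (hT t ht f)
      have h2 : eLpNorm (fun x => ((a (x + t) / a x : ℝ) : ℂ) * f (x + t)) 2 (volume.restrict (Set.Ioi (0:ℝ)))
          ≤ eLpNorm (fun x => (M : ℂ) * f (x + t)) 2 (volume.restrict (Set.Ioi (0:ℝ))) := by
        refine eLpNorm_mono_ae ?_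
        refine (ae_restrict_iff' measurableSet_Ioi).2 (ae_of_all _ fun x hx => ?_)
        have hx0 : (0:ℝ) ≤ x := le_of_lt hx
        rw [norm_mul, norm_mul, Complex.norm_real, Complex.norm_real]
        have hsub : (x + t) ^ β ≤ x ^ β + t ^ β := aux_subadd hβ0.le hβ1 hx0 ht
        have hmx : a (x + t) / a x ≤ M := by
          rw [hm, hMdef]
          apply Real.exp_le_exp.2
          nlinarith
        have hmx0 : 0 ≤ a (x + t) / a x := by
          rw [hm]; exact (Real.exp_pos _).le
        gcongr
        rw [Real.norm_eq_abs, Real.norm_eq_abs, abs_of_nonneg hmx0, abs_of_pos hM]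
        exact hmx
      have h3 : eLpNorm (fun x => (M : ℂ) * f (x + t)) 2 (volume.restrict (Set.Ioi (0:ℝ)))
          = (‖(M : ℂ)‖₊ : ℝ≥0∞) * eLpNorm (fun x => f (x + t)) 2 (volume.restrict (Set.Ioi (0:ℝ))) := by
        have := eLpNorm_const_smul (M : ℂ) (fun x => (f : ℝ → ℂ) (x + t)) 2 (volume.restrict (Set.Ioi (0:ℝ)))
        rw [← enorm_eq_nnnorm, ← this]; rfl
      have h4 := aux_shift (f : ℝ → ℂ) t ht
      have h5 : eLpNorm (⇑(T t f)) 2 (volume.restrict (Set.Ioi (0:ℝ))) ≤ ENNReal.ofReal M * eLpNorm (⇑f) 2 (volume.restrict (Set.Ioi (0:ℝ))) := by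
        rw [h1]
        refine h2.trans ?_
        rw [h3, ← enorm_eq_nnnorm, ← ofReal_norm, Complex.norm_real, Real.norm_eq_abs,
          abs_of_pos hM]
        exact mul_le_mul_right h4 _
      have hfin : ENNReal.ofReal M * eLpNorm (⇑f) 2 (volume.restrict (Set.Ioi (0:ℝ))) ≠ ⊤ :=
        ENNReal.mul_ne_top ENNReal.ofReal_ne_top (Lp.eLpNorm_ne_top f)
      calc ‖T t f‖ = (eLpNorm (⇑(T t f)) 2 (volume.restrict (Set.Ioi (0:ℝ)))).toReal := by rw [Lp.norm_def]
        _ ≤ (ENNReal.ofReal M * eLpNorm (⇑f) 2 (volume.restrict (Set.Ioi (0:ℝ)))).toReal := ENNReal.toReal_mono hfin h5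
        _ = M * ‖f‖ := by
            rw [ENNReal.toReal_mul, ENNReal.toReal_ofReal hM.le, Lp.norm_def]
    · -- lower bound
      have hlim : Tendsto (fun ε : ℝ => Real.exp (c * (t ^ β - ε ^ β))) (𝓝[>] (0:ℝ))
          (𝓝 M) := by
        have h1 : Tendsto (fun ε : ℝ => ε ^ β) (𝓝[>] (0:ℝ)) (𝓝 0) := by
          have h := (Real.continuousAt_rpow_const 0 β (Or.inr hβ0.le)).tendsto
          rw [Real.zero_rpow hβ0.ne'] at h
          exact h.mono_left nhdsWithin_le_nhds
        have h2 : Tendsto (fun ε : ℝ => c * (t ^ β - ε ^ β)) (𝓝[>] (0:ℝ))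
            (𝓝 (c * t ^ β)) := by
          have hconst : Tendsto (fun _ : ℝ => t ^ β) (𝓝[>] (0:ℝ)) (𝓝 (t ^ β)) :=
            tendsto_const_nhds
          have := (hconst.sub h1).const_mul c
          simpa using this
        exact (Real.continuous_exp.tendsto _).comp h2
      refine le_of_tendsto hlim ?_
      filter_upwards [self_mem_nhdsWithin] with ε hε
      simp only [Set.mem_Ioi] at hε
      set K : ℝ := Real.exp (c * (t ^ β - ε ^ β)) with hKdef
      have hK : 0 < K := Real.exp_pos _
      -- the test function
      set s : Set ℝ := Set.Ioo t (t + ε) with hs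
      have hssub : s ⊆ Set.Ioi (0:ℝ) := fun x hx => lt_of_le_of_lt ht hx.1
      have hμs : (volume.restrict (Set.Ioi (0:ℝ))) s = ENNReal.ofReal ε := by
        rw [Measure.restrict_apply measurableSet_Ioo,
          Set.inter_eq_self_of_subset_left hssub, Real.volume_Ioo]
        congr 1; ring
      set g : ℝ → ℂ := s.indicator fun _ => (1:ℂ) with hg
      have hmem : MemLp g 2 (volume.restrict (Set.Ioi (0:ℝ))) :=
        memLp_indicator_const 2 measurableSet_Ioo 1 (Or.inr (by rw [hμs]; exact ofReal_ne_top))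
      set f : Lp ℂ 2 (volume.restrict (Set.Ioi (0:ℝ))) := hmem.toLp g with hf
      have hfg : ⇑f =ᵐ[volume.restrict (Set.Ioi (0:ℝ))] g := hmem.coeFn_toLp
      have hεr : (0:ℝ) < ε ^ (1/(2:ℝ)) := Real.rpow_pos_of_pos hε _
      have hnf : ‖f‖ = ε ^ (1/(2:ℝ)) := by
        rw [hf, Lp.norm_toLp, hg, eLpNorm_indicator_const measurableSet_Ioo two_ne_zero
          ENNReal.ofNat_ne_top, hμs]
        simp only [enorm_one, nnnorm_one, ENNReal.coe_one, one_mul, ENNReal.toReal_ofNat]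
        rw [ENNReal.ofReal_rpow_of_pos hε, ENNReal.toReal_ofReal (Real.rpow_nonneg hε.le _)]
      -- transfer f = g through the shift
      have h0 : ∀ᵐ x ∂volume, x ∈ Set.Ioi (0:ℝ) → f x = g x :=
        (ae_restrict_iff' measurableSet_Ioi).1 hfg
      have h1 : ∀ᵐ x ∂volume, x + t ∈ Set.Ioi (0:ℝ) → f (x + t) = g (x + t) :=
        (measurePreserving_add_right volume t).quasiMeasurePreserving.tendsto_ae.eventually h0
      -- the key eLpNorm lower bound
      have hbound : ENNReal.ofReal K * (ENNReal.ofReal ε) ^ (1/(2:ℝ))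
          ≤ eLpNorm (⇑(T t f)) 2 (volume.restrict (Set.Ioi (0:ℝ))) := by
        have hg' : eLpNorm ((Set.Ioo (0:ℝ) ε).indicator fun _ => (K:ℂ)) 2 (volume.restrict (Set.Ioi (0:ℝ)))
            = ENNReal.ofReal K * (ENNReal.ofReal ε) ^ (1/(2:ℝ)) := by
          have hμs' : (volume.restrict (Set.Ioi (0:ℝ))) (Set.Ioo (0:ℝ) ε) = ENNReal.ofReal ε := by
            rw [Measure.restrict_apply measurableSet_Ioo,
              Set.inter_eq_self_of_subset_left Set.Ioo_subset_Ioi_self, Real.volume_Ioo]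
            congr 1; ring
          rw [eLpNorm_indicator_const measurableSet_Ioo two_ne_zero ENNReal.ofNat_ne_top, hμs',
            ← ofReal_norm, Complex.norm_real, Real.norm_eq_abs, abs_of_pos hK]
          norm_num
        rw [← hg', eLpNorm_congr_ae (hT t ht f)]
        refine eLpNorm_mono_ae ?_
        filter_upwards [ae_restrict_of_ae h1, ae_restrict_mem measurableSet_Ioi]
          with x h1x hx
        have hx0 : (0:ℝ) < x := hx
        have hxt : x + t ∈ Set.Ioi (0:ℝ) := by
          simp only [Set.mem_Ioi]; linarith
        rw [h1x hxt]
        by_cases hxε : x ∈ Set.Ioo (0:ℝ) ε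
        · have hgx : g (x + t) = 1 := by
            rw [hg, Set.indicator_of_mem]
            constructor
            · linarith [hxε.1]
            · linarith [hxε.2]
          rw [Set.indicator_of_mem hxε, hgx, mul_one, Complex.norm_real,
            Complex.norm_real, Real.norm_eq_abs, Real.norm_eq_abs, abs_of_pos hK,
            hm, abs_of_pos (Real.exp_pos _)]
          apply Real.exp_le_exp.2
          have h1' : t ^ β ≤ (x + t) ^ β :=
            Real.rpow_le_rpow ht (by linarith) hβ0.le
          have h2' : x ^ β ≤ ε ^ β :=
            Real.rpow_le_rpow hx0.le hxε.2.le hβ0.le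
          nlinarith
        · rw [Set.indicator_of_notMem hxε]
          simp only [norm_zero]
          positivity
      -- convert to a norm inequality
      have hKf : K * ‖f‖ ≤ ‖T t f‖ := by
        have hfin : eLpNorm (⇑(T t f)) 2 (volume.restrict (Set.Ioi (0:ℝ))) ≠ ⊤ := Lp.eLpNorm_ne_top _
        have := ENNReal.toReal_mono hfin hbound
        rw [ENNReal.toReal_mul, ENNReal.toReal_ofReal hK.le,
          ENNReal.ofReal_rpow_of_pos hε,
          ENNReal.toReal_ofReal (Real.rpow_nonneg hε.le _), ← hnf, ← Lp.norm_def] at this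
        exact this
      have hTf : ‖T t f‖ ≤ ‖T t‖ * ‖f‖ := (T t).le_opNorm f
      have hfpos : 0 < ‖f‖ := by rw [hnf]; exact hεr
      have := hKf.trans hTf
      exact le_of_mul_le_mul_right this hfpos
  -- Part 2
  have part2 : ConcaveOn ℝ (Set.Ici (0:ℝ)) (fun t => c * t ^ β) := by
    have h := (Real.strictConcaveOn_rpow hβ0 (by simp only [hβdef]; linarith)).concaveOn
    have := h.smul hc.le
    simpa [smul_eq_mul] using this
  refine ⟨part1, part2, ?_⟩
  intro ν hν hmaj hmin t ht
  have hκ := hmin (fun t => c * t ^ β) part2 (fun t ht => by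
    rw [part1 t ht, Real.log_exp])
  have h1 : ν t ≤ c * t ^ β := hκ t ht
  have h2 : c * t ^ β ≤ ν t := by
    have := hmaj t ht
    rwa [part1 t ht, Real.log_exp] at this
  have hνt : ν t = c * t ^ β := le_antisymm h1 h2
  rw [hνt, ← part1 t ht]
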